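/- Let E and F be real inner product spaces, let T > 0, δ > 0 and K ≥ 0 be real numbers, and let w, v : ℝ → E and g, h : ℝ → F be continuously differentiable on [0, T] with w(0) = 0. Assume the inverse-inequality hypothesis δ² ∫₀ᵀ‖h′(t)‖² dt ≤ K² ∫₀ᵀ‖h(t)‖² dt. Then | ∫₀ᵀ ( ⟨w′(t), v(t)⟩_E + δ⟨w′(t), v′(t)⟩_E + ⟨g(t), h(t)⟩_F + δ⟨g(t), h′(t)⟩_F ) dt | ≤ √(2·max{2, 1+K²}) · ( ∫₀ᵀ(‖g(t)‖² + δ‖w′(t)‖² + δ⁻¹‖w(t)‖²) dt + ‖w(T)‖² + δ‖g(T)‖² )^{1/2} · ( ∫₀ᵀ(‖h(t)‖² + δ‖v′(t)‖²) dt + ‖v(T)‖² + δ‖h(T)‖² )^{1/2}. -/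

import Mathlib

open intervalIntegral Set MeasureTheory

-- real Cauchy-Schwarz for interval integrals
lemma cs_real_aux (T : ℝ) (hT : 0 ≤ T) (u v : ℝ → ℝ)
    (hu : ContinuousOn u (Set.Icc 0 T)) (hv : ContinuousOn v (Set.Icc 0 T))
    (hu0 : ∀ t ∈ Set.Icc (0:ℝ) T, 0 ≤ u t) (hv0 : ∀ t ∈ Set.Icc (0:ℝ) T, 0 ≤ v t) :
    (∫ t in (0:ℝ)..T, u t * v t)
      ≤ Real.sqrt (∫ t in (0:ℝ)..T, u t ^ 2) * Real.sqrt (∫ t in (0:ℝ)..T, v t ^ 2) := by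
  have huIcc : Set.uIcc (0:ℝ) T = Set.Icc 0 T := Set.uIcc_of_le hT
  have iiu2 : IntervalIntegrable (fun t => u t ^ 2) volume 0 T :=
    ((hu.pow 2).mono huIcc.subset).intervalIntegrable
  have iiv2 : IntervalIntegrable (fun t => v t ^ 2) volume 0 T :=
    ((hv.pow 2).mono huIcc.subset).intervalIntegrable
  have iiuv : IntervalIntegrable (fun t => u t * v t) volume 0 T :=
    ((hu.mul hv).mono huIcc.subset).intervalIntegrable
  set A := ∫ t in (0:ℝ)..T, u t ^ 2 with hA
  set B := ∫ t in (0:ℝ)..T, v t ^ 2 with hB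
  set D := ∫ t in (0:ℝ)..T, u t * v t with hD
  have hA0 : 0 ≤ A := intervalIntegral.integral_nonneg hT (fun t _ => sq_nonneg _)
  have hB0 : 0 ≤ B := intervalIntegral.integral_nonneg hT (fun t _ => sq_nonneg _)
  have hD0 : 0 ≤ D := intervalIntegral.integral_nonneg hT
    (fun t ht => mul_nonneg (hu0 t ht) (hv0 t ht))
  have quad : ∀ l : ℝ, 0 ≤ A - 2 * l * D + l ^ 2 * B := by
    intro l
    have h0 : 0 ≤ ∫ t in (0:ℝ)..T, (u t - l * v t) ^ 2 :=
      intervalIntegral.integral_nonneg hT (fun t _ => sq_nonneg _)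
    have hexp : (∫ t in (0:ℝ)..T, (u t - l * v t) ^ 2)
        = A - 2 * l * D + l ^ 2 * B := by
      have : ∀ t, (u t - l * v t) ^ 2
          = u t ^ 2 - (2 * l) * (u t * v t) + l ^ 2 * v t ^ 2 := fun t => by ring
      simp_rw [this]
      rw [intervalIntegral.integral_add ((iiu2.sub (iiuv.const_mul (2*l)))) (iiv2.const_mul (l^2)),
        intervalIntegral.integral_sub iiu2 (iiuv.const_mul (2*l)),
        intervalIntegral.integral_const_mul, intervalIntegral.integral_const_mul]
    linarith [hexp ▸ h0]
  have hDsq : D ^ 2 ≤ A * B := by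
    rcases eq_or_lt_of_le hB0 with hBeq | hBpos
    · have hDz : D = 0 := by
        by_contra hne
        have hDpos : 0 < D := lt_of_le_of_ne hD0 (Ne.symm hne)
        have hq := quad (A / (2 * D) + 1)
        have hc : 2 * (A / (2 * D) + 1) * D = A + 2 * D := by
          field_simp
        rw [← hBeq] at hq
        rw [hc] at hq
        linarith
      simp [hDz, ← hBeq]
    · have hq := quad (D / B)
      have hBne : B ≠ 0 := ne_of_gt hBpos
      have hc : A - 2 * (D / B) * D + (D / B) ^ 2 * B = A - D ^ 2 / B := by
        field_simp
        ring
      rw [hc] at hq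
      have : D ^ 2 / B ≤ A := by linarith
      calc D ^ 2 = D ^ 2 / B * B := by field_simp
        _ ≤ A * B := mul_le_mul_of_nonneg_right this hBpos.le
  calc D = Real.sqrt (D ^ 2) := by rw [Real.sqrt_sq hD0]
    _ ≤ Real.sqrt (A * B) := Real.sqrt_le_sqrt hDsq
    _ = Real.sqrt A * Real.sqrt B := Real.sqrt_mul hA0 B

lemma cs_inner_aux {G : Type*} [NormedAddCommGroup G] [InnerProductSpace ℝ G]
    (T : ℝ) (hT : 0 ≤ T) (f g : ℝ → G)
    (hf : ContinuousOn f (Set.Icc 0 T)) (hg : ContinuousOn g (Set.Icc 0 T)) :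
    |∫ t in (0:ℝ)..T, (inner ℝ (f t) (g t) : ℝ)|
      ≤ Real.sqrt (∫ t in (0:ℝ)..T, ‖f t‖ ^ 2) * Real.sqrt (∫ t in (0:ℝ)..T, ‖g t‖ ^ 2) := by
  have huIcc : Set.uIcc (0:ℝ) T = Set.Icc 0 T := Set.uIcc_of_le hT
  have hfg : ContinuousOn (fun t => (inner ℝ (f t) (g t) : ℝ)) (Set.Icc 0 T) := hf.inner hg
  have ii1 : IntervalIntegrable (fun t => |(inner ℝ (f t) (g t) : ℝ)|) MeasureTheory.volume 0 T :=
    (hfg.abs.mono huIcc.subset).intervalIntegrable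
  have ii2 : IntervalIntegrable (fun t => ‖f t‖ * ‖g t‖) MeasureTheory.volume 0 T :=
    ((hf.norm.mul hg.norm).mono huIcc.subset).intervalIntegrable
  calc |∫ t in (0:ℝ)..T, (inner ℝ (f t) (g t) : ℝ)|
      ≤ ∫ t in (0:ℝ)..T, |(inner ℝ (f t) (g t) : ℝ)| :=
        intervalIntegral.abs_integral_le_integral_abs hT
    _ ≤ ∫ t in (0:ℝ)..T, ‖f t‖ * ‖g t‖ :=
        intervalIntegral.integral_mono_on hT ii1 ii2
          (fun t _ => abs_real_inner_le_norm (f t) (g t))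
    _ ≤ Real.sqrt (∫ t in (0:ℝ)..T, ‖f t‖ ^ 2) * Real.sqrt (∫ t in (0:ℝ)..T, ‖g t‖ ^ 2) :=
        cs_real_aux T hT _ _ hf.norm hg.norm (fun t _ => norm_nonneg _) (fun t _ => norm_nonneg _)

lemma cs3_aux (a1 a2 a3 b1 b2 b3 : ℝ) (ha1 : 0 ≤ a1) (ha2 : 0 ≤ a2) (ha3 : 0 ≤ a3)
    (hb1 : 0 ≤ b1) (hb2 : 0 ≤ b2) (hb3 : 0 ≤ b3) :
    Real.sqrt a1 * Real.sqrt b1 + Real.sqrt a2 * Real.sqrt b2 + Real.sqrt a3 * Real.sqrt b3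
      ≤ Real.sqrt (a1 + a2 + a3) * Real.sqrt (b1 + b2 + b3) := by
  set s1 := Real.sqrt a1; set s2 := Real.sqrt a2; set s3 := Real.sqrt a3
  set t1 := Real.sqrt b1; set t2 := Real.sqrt b2; set t3 := Real.sqrt b3
  have hs1 : s1 ^ 2 = a1 := Real.sq_sqrt ha1
  have hs2 : s2 ^ 2 = a2 := Real.sq_sqrt ha2
  have hs3 : s3 ^ 2 = a3 := Real.sq_sqrt ha3
  have ht1 : t1 ^ 2 = b1 := Real.sq_sqrt hb1
  have ht2 : t2 ^ 2 = b2 := Real.sq_sqrt hb2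
  have ht3 : t3 ^ 2 = b3 := Real.sq_sqrt hb3
  have hL : 0 ≤ s1 * t1 + s2 * t2 + s3 * t3 := by positivity
  rw [show Real.sqrt (a1 + a2 + a3) * Real.sqrt (b1 + b2 + b3)
      = Real.sqrt ((a1 + a2 + a3) * (b1 + b2 + b3)) from
      (Real.sqrt_mul (by linarith) _).symm, ← Real.sqrt_sq hL]
  apply Real.sqrt_le_sqrt
  have key : (a1 + a2 + a3) * (b1 + b2 + b3) - (s1 * t1 + s2 * t2 + s3 * t3) ^ 2
      = (s1 * t2 - s2 * t1) ^ 2 + (s1 * t3 - s3 * t1) ^ 2 + (s2 * t3 - s3 * t2) ^ 2 := by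
    rw [← hs1, ← hs2, ← hs3, ← ht1, ← ht2, ← ht3]
    ring
  linarith [sq_nonneg (s1 * t2 - s2 * t1), sq_nonneg (s1 * t3 - s3 * t1),
    sq_nonneg (s2 * t3 - s3 * t2)]

lemma sqrt2add_aux (x y : ℝ) (hx : 0 ≤ x) (hy : 0 ≤ y) :
    Real.sqrt x + Real.sqrt y ≤ Real.sqrt 2 * Real.sqrt (x + y) := by
  have hL : 0 ≤ Real.sqrt x + Real.sqrt y := by positivity
  rw [← Real.sqrt_mul (by norm_num), ← Real.sqrt_sq hL]
  apply Real.sqrt_le_sqrt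
  have key : 2 * (x + y) - (Real.sqrt x + Real.sqrt y) ^ 2
      = (Real.sqrt x - Real.sqrt y) ^ 2 + 2 * (x - Real.sqrt x ^ 2) + 2 * (y - Real.sqrt y ^ 2) := by
    ring
  have h1 := Real.sq_sqrt hx
  have h2 := Real.sq_sqrt hy
  linarith [sq_nonneg (Real.sqrt x - Real.sqrt y)]

set_option maxHeartbeats 1000000 in
theorem stmt_1 {E F : Type*} [NormedAddCommGroup E] [InnerProductSpace ℝ E]
    [NormedAddCommGroup F] [InnerProductSpace ℝ F]
    (T δ K : ℝ) (hT : 0 < T) (hδ : 0 < δ) (hK : 0 ≤ K)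
    (w w' v v' : ℝ → E) (g g' h h' : ℝ → F)
    (hw : ∀ t ∈ Set.Icc (0:ℝ) T, HasDerivAt w (w' t) t)
    (hv : ∀ t ∈ Set.Icc (0:ℝ) T, HasDerivAt v (v' t) t)
    (hg : ∀ t ∈ Set.Icc (0:ℝ) T, HasDerivAt g (g' t) t)
    (hh : ∀ t ∈ Set.Icc (0:ℝ) T, HasDerivAt h (h' t) t)
    (hwc : ContinuousOn w' (Set.Icc (0:ℝ) T))
    (hvc : ContinuousOn v' (Set.Icc (0:ℝ) T))
    (hgc : ContinuousOn g' (Set.Icc (0:ℝ) T))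
    (hhc : ContinuousOn h' (Set.Icc (0:ℝ) T))
    (hw0 : w 0 = 0)
    (hinv : δ ^ 2 * (∫ t in (0:ℝ)..T, ‖h' t‖ ^ 2)
      ≤ K ^ 2 * (∫ t in (0:ℝ)..T, ‖h t‖ ^ 2)) :
    |∫ t in (0:ℝ)..T,
        ((inner ℝ (w' t) (v t) : ℝ) + δ * (inner ℝ (w' t) (v' t) : ℝ)
          + (inner ℝ (g t) (h t) : ℝ) + δ * (inner ℝ (g t) (h' t) : ℝ))|
      ≤ Real.sqrt (2 * max 2 (1 + K ^ 2))
        * Real.sqrt ((∫ t in (0:ℝ)..T,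
              (‖g t‖ ^ 2 + δ * ‖w' t‖ ^ 2 + δ⁻¹ * ‖w t‖ ^ 2))
            + ‖w T‖ ^ 2 + δ * ‖g T‖ ^ 2)
        * Real.sqrt ((∫ t in (0:ℝ)..T, (‖h t‖ ^ 2 + δ * ‖v' t‖ ^ 2))
            + ‖v T‖ ^ 2 + δ * ‖h T‖ ^ 2) := by
  have hT0 : (0:ℝ) ≤ T := hT.le
  have huIcc : Set.uIcc (0:ℝ) T = Set.Icc 0 T := Set.uIcc_of_le hT0
  have hwC : ContinuousOn w (Set.Icc 0 T) :=
    fun t ht => (hw t ht).continuousAt.continuousWithinAt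
  have hvC : ContinuousOn v (Set.Icc 0 T) :=
    fun t ht => (hv t ht).continuousAt.continuousWithinAt
  have hgC : ContinuousOn g (Set.Icc 0 T) :=
    fun t ht => (hg t ht).continuousAt.continuousWithinAt
  have hhC : ContinuousOn h (Set.Icc 0 T) :=
    fun t ht => (hh t ht).continuousAt.continuousWithinAt
  -- integrability of all inner products
  have ii1 : IntervalIntegrable (fun t => (inner ℝ (w' t) (v t) : ℝ)) MeasureTheory.volume 0 T :=
    ((hwc.inner hvC).mono huIcc.subset).intervalIntegrable
  have ii2 : IntervalIntegrable (fun t => (inner ℝ (w' t) (v' t) : ℝ)) MeasureTheory.volume 0 T :=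
    ((hwc.inner hvc).mono huIcc.subset).intervalIntegrable
  have ii3 : IntervalIntegrable (fun t => (inner ℝ (g t) (h t) : ℝ)) MeasureTheory.volume 0 T :=
    ((hgC.inner hhC).mono huIcc.subset).intervalIntegrable
  have ii4 : IntervalIntegrable (fun t => (inner ℝ (g t) (h' t) : ℝ)) MeasureTheory.volume 0 T :=
    ((hgC.inner hhc).mono huIcc.subset).intervalIntegrable
  have iiwv' : IntervalIntegrable (fun t => (inner ℝ (w t) (v' t) : ℝ)) MeasureTheory.volume 0 T :=
    ((hwC.inner hvc).mono huIcc.subset).intervalIntegrable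
  -- square integrabilities
  have iig2 : IntervalIntegrable (fun t => ‖g t‖ ^ 2) MeasureTheory.volume 0 T :=
    (((hgC.norm.pow 2)).mono huIcc.subset).intervalIntegrable
  have iiw'2 : IntervalIntegrable (fun t => ‖w' t‖ ^ 2) MeasureTheory.volume 0 T :=
    (((hwc.norm.pow 2)).mono huIcc.subset).intervalIntegrable
  have iiw2 : IntervalIntegrable (fun t => ‖w t‖ ^ 2) MeasureTheory.volume 0 T :=
    (((hwC.norm.pow 2)).mono huIcc.subset).intervalIntegrable
  have iih2 : IntervalIntegrable (fun t => ‖h t‖ ^ 2) MeasureTheory.volume 0 T :=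
    (((hhC.norm.pow 2)).mono huIcc.subset).intervalIntegrable
  have iiv'2 : IntervalIntegrable (fun t => ‖v' t‖ ^ 2) MeasureTheory.volume 0 T :=
    (((hvc.norm.pow 2)).mono huIcc.subset).intervalIntegrable
  set I1 := ∫ t in (0:ℝ)..T, (inner ℝ (w' t) (v t) : ℝ) with hI1
  set I2 := ∫ t in (0:ℝ)..T, (inner ℝ (w' t) (v' t) : ℝ) with hI2
  set I3 := ∫ t in (0:ℝ)..T, (inner ℝ (g t) (h t) : ℝ) with hI3
  set I4 := ∫ t in (0:ℝ)..T, (inner ℝ (g t) (h' t) : ℝ) with hI4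
  set J := ∫ t in (0:ℝ)..T, (inner ℝ (w t) (v' t) : ℝ) with hJ
  -- split the main integral
  have hsplit : (∫ t in (0:ℝ)..T,
        ((inner ℝ (w' t) (v t) : ℝ) + δ * (inner ℝ (w' t) (v' t) : ℝ)
          + (inner ℝ (g t) (h t) : ℝ) + δ * (inner ℝ (g t) (h' t) : ℝ)))
      = I1 + δ * I2 + I3 + δ * I4 := by
    rw [intervalIntegral.integral_add ((ii1.add (ii2.const_mul δ)).add ii3) (ii4.const_mul δ),
      intervalIntegral.integral_add (ii1.add (ii2.const_mul δ)) ii3,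
      intervalIntegral.integral_add ii1 (ii2.const_mul δ),
      intervalIntegral.integral_const_mul, intervalIntegral.integral_const_mul]
  -- integration by parts
  have hipp : J + I1 = (inner ℝ (w T) (v T) : ℝ) := by
    have hder : ∀ t ∈ Set.uIcc (0:ℝ) T,
        HasDerivAt (fun t => (inner ℝ (w t) (v t) : ℝ))
          ((inner ℝ (w t) (v' t) : ℝ) + (inner ℝ (w' t) (v t) : ℝ)) t := by
      intro t ht
      have ht' : t ∈ Set.Icc (0:ℝ) T := huIcc ▸ ht
      exact (hw t ht').inner ℝ (hv t ht')
    have := intervalIntegral.integral_eq_sub_of_hasDerivAt hder (iiwv'.add ii1)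
    rw [intervalIntegral.integral_add iiwv' ii1] at this
    rw [hw0] at this
    simpa using this
  set aw := ∫ t in (0:ℝ)..T, ‖w t‖ ^ 2 with haw
  set aw' := ∫ t in (0:ℝ)..T, ‖w' t‖ ^ 2 with haw'
  set ag := ∫ t in (0:ℝ)..T, ‖g t‖ ^ 2 with hag
  set av' := ∫ t in (0:ℝ)..T, ‖v' t‖ ^ 2 with hav'
  set ah := ∫ t in (0:ℝ)..T, ‖h t‖ ^ 2 with hah
  set ah' := ∫ t in (0:ℝ)..T, ‖h' t‖ ^ 2 with hah'
  have haw0 : 0 ≤ aw := intervalIntegral.integral_nonneg hT0 (fun t _ => sq_nonneg _)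
  have haw'0 : 0 ≤ aw' := intervalIntegral.integral_nonneg hT0 (fun t _ => sq_nonneg _)
  have hag0 : 0 ≤ ag := intervalIntegral.integral_nonneg hT0 (fun t _ => sq_nonneg _)
  have hav'0 : 0 ≤ av' := intervalIntegral.integral_nonneg hT0 (fun t _ => sq_nonneg _)
  have hah0 : 0 ≤ ah := intervalIntegral.integral_nonneg hT0 (fun t _ => sq_nonneg _)
  have hah'0 : 0 ≤ ah' := intervalIntegral.integral_nonneg hT0 (fun t _ => sq_nonneg _)
  -- Cauchy-Schwarz bounds
  have hbJ : |J| ≤ Real.sqrt aw * Real.sqrt av' := cs_inner_aux T hT0 w v' hwC hvc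
  have hb2 : |I2| ≤ Real.sqrt aw' * Real.sqrt av' := cs_inner_aux T hT0 w' v' hwc hvc
  have hb3 : |I3| ≤ Real.sqrt ag * Real.sqrt ah := cs_inner_aux T hT0 g h hgC hhC
  have hb4 : |I4| ≤ Real.sqrt ag * Real.sqrt ah' := cs_inner_aux T hT0 g h' hgC hhc
  have hbT : |(inner ℝ (w T) (v T) : ℝ)| ≤ ‖w T‖ * ‖v T‖ := abs_real_inner_le_norm _ _
  set A1 := δ * aw' + δ⁻¹ * aw with hA1
  set A3 := ‖w T‖ ^ 2 with hA3
  set B1 := δ * av' with hB1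
  set B3 := ‖v T‖ ^ 2 with hB3
  have hA10 : 0 ≤ A1 := by positivity
  have hB10 : 0 ≤ B1 := by positivity
  -- sqrt manipulations
  have f1 : ‖w T‖ * ‖v T‖ = Real.sqrt A3 * Real.sqrt B3 := by
    rw [hA3, hB3, Real.sqrt_sq (norm_nonneg _), Real.sqrt_sq (norm_nonneg _)]
  have f2 : Real.sqrt aw * Real.sqrt av' = Real.sqrt (δ⁻¹ * aw) * Real.sqrt B1 := by
    rw [← Real.sqrt_mul haw0, ← Real.sqrt_mul (by positivity : (0:ℝ) ≤ δ⁻¹ * aw)]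
    congr 1
    rw [hB1]
    field_simp
  have f3 : δ * (Real.sqrt aw' * Real.sqrt av')
      = Real.sqrt (δ * aw') * Real.sqrt B1 := by
    rw [hB1, Real.sqrt_mul hδ.le, Real.sqrt_mul hδ.le]
    have hdd : Real.sqrt δ * Real.sqrt δ = δ := Real.mul_self_sqrt hδ.le
    calc δ * (Real.sqrt aw' * Real.sqrt av')
        = (Real.sqrt δ * Real.sqrt δ) * (Real.sqrt aw' * Real.sqrt av') := by rw [hdd]
      _ = Real.sqrt δ * Real.sqrt aw' * (Real.sqrt δ * Real.sqrt av') := by ring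
  have f4 : δ * Real.sqrt ah' ≤ K * Real.sqrt ah := by
    have e1 : δ * Real.sqrt ah' = Real.sqrt (δ ^ 2 * ah') := by
      rw [Real.sqrt_mul (sq_nonneg δ), Real.sqrt_sq hδ.le]
    have e2 : Real.sqrt (K ^ 2 * ah) = K * Real.sqrt ah := by
      rw [Real.sqrt_mul (sq_nonneg K), Real.sqrt_sq hK]
    rw [e1, ← e2]
    exact Real.sqrt_le_sqrt hinv
  -- step 1: bound LHS by five terms
  have hI1eq : I1 = (inner ℝ (w T) (v T) : ℝ) - J := by linarith
  have step1 : |I1 + δ * I2 + I3 + δ * I4|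
      ≤ Real.sqrt A3 * Real.sqrt B3
        + (Real.sqrt (δ * aw') + Real.sqrt (δ⁻¹ * aw)) * Real.sqrt B1
        + (1 + K) * (Real.sqrt ag * Real.sqrt ah) := by
    have habs : |I1 + δ * I2 + I3 + δ * I4|
        ≤ |(inner ℝ (w T) (v T) : ℝ)| + |J| + δ * |I2| + |I3| + δ * |I4| := by
      rw [hI1eq]
      have h1 : |(inner ℝ (w T) (v T) : ℝ) - J + δ * I2 + I3 + δ * I4|
          ≤ |(inner ℝ (w T) (v T) : ℝ)| + |J| + |δ * I2| + |I3| + |δ * I4| := by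
        calc |(inner ℝ (w T) (v T) : ℝ) - J + δ * I2 + I3 + δ * I4|
            ≤ |(inner ℝ (w T) (v T) : ℝ) - J + δ * I2 + I3| + |δ * I4| := abs_add_le _ _
          _ ≤ |(inner ℝ (w T) (v T) : ℝ) - J + δ * I2| + |I3| + |δ * I4| := by
              linarith [abs_add_le ((inner ℝ (w T) (v T) : ℝ) - J + δ * I2) I3]
          _ ≤ |(inner ℝ (w T) (v T) : ℝ) - J| + |δ * I2| + |I3| + |δ * I4| := by
              linarith [abs_add_le ((inner ℝ (w T) (v T) : ℝ) - J) (δ * I2)]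
          _ ≤ |(inner ℝ (w T) (v T) : ℝ)| + |J| + |δ * I2| + |I3| + |δ * I4| := by
              linarith [abs_sub ((inner ℝ (w T) (v T) : ℝ)) J]
      rw [abs_mul, abs_mul, abs_of_pos hδ] at h1
      exact h1
    have hd2 : δ * |I2| ≤ Real.sqrt (δ * aw') * Real.sqrt B1 := by
      rw [← f3]
      exact mul_le_mul_of_nonneg_left hb2 hδ.le
    have hdJ : |J| ≤ Real.sqrt (δ⁻¹ * aw) * Real.sqrt B1 := by rw [← f2]; exact hbJ
    have hd4 : δ * |I4| ≤ K * (Real.sqrt ag * Real.sqrt ah) := by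
      calc δ * |I4| ≤ δ * (Real.sqrt ag * Real.sqrt ah') :=
            mul_le_mul_of_nonneg_left hb4 hδ.le
        _ = Real.sqrt ag * (δ * Real.sqrt ah') := by ring
        _ ≤ Real.sqrt ag * (K * Real.sqrt ah) :=
            mul_le_mul_of_nonneg_left f4 (Real.sqrt_nonneg ag)
        _ = K * (Real.sqrt ag * Real.sqrt ah) := by ring
    rw [f1] at hbT
    have e1 : (Real.sqrt (δ * aw') + Real.sqrt (δ⁻¹ * aw)) * Real.sqrt B1
        = Real.sqrt (δ * aw') * Real.sqrt B1 + Real.sqrt (δ⁻¹ * aw) * Real.sqrt B1 := by ring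
    have e2 : (1 + K) * (Real.sqrt ag * Real.sqrt ah)
        = Real.sqrt ag * Real.sqrt ah + K * (Real.sqrt ag * Real.sqrt ah) := by ring
    linarith
  -- step 2: absorb into sqrt M
  set M := 2 * max 2 (1 + K ^ 2) with hM
  have hmax2 : (2:ℝ) ≤ max 2 (1 + K ^ 2) := le_max_left _ _
  have hmaxK : (1 + K ^ 2 : ℝ) ≤ max 2 (1 + K ^ 2) := le_max_right _ _
  have hM4 : (4:ℝ) ≤ M := by rw [hM]; linarith
  have hsq2 : Real.sqrt 2 ≤ Real.sqrt M := Real.sqrt_le_sqrt (by linarith)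
  have hsqK : (1 + K) ≤ Real.sqrt M := by
    have h1 : (1 + K) = Real.sqrt ((1 + K) ^ 2) := (Real.sqrt_sq (by linarith)).symm
    rw [h1]
    apply Real.sqrt_le_sqrt
    have h2K : 2 * K ≤ 1 + K ^ 2 := by
      have := sq_nonneg (1 - K)
      linarith
    calc (1 + K) ^ 2 = 1 + 2 * K + K ^ 2 := by ring
      _ ≤ 1 + (1 + K ^ 2) + K ^ 2 := by linarith
      _ = 2 * (1 + K ^ 2) := by ring
      _ ≤ M := by rw [hM]; linarith
  have hsq1 : (1:ℝ) ≤ Real.sqrt M := by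
    have : Real.sqrt 1 ≤ Real.sqrt M := Real.sqrt_le_sqrt (by linarith)
    simpa using this
  have hadd : Real.sqrt (δ * aw') + Real.sqrt (δ⁻¹ * aw)
      ≤ Real.sqrt 2 * Real.sqrt A1 := by
    have := sqrt2add_aux (δ * aw') (δ⁻¹ * aw) (by positivity) (by positivity)
    rwa [← hA1] at this
  have step2 : |I1 + δ * I2 + I3 + δ * I4|
      ≤ Real.sqrt M * (Real.sqrt A1 * Real.sqrt B1 + Real.sqrt ag * Real.sqrt ah
        + Real.sqrt A3 * Real.sqrt B3) := by
    have p1 : (0:ℝ) ≤ Real.sqrt A1 * Real.sqrt B1 := by positivity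
    have p2 : (0:ℝ) ≤ Real.sqrt ag * Real.sqrt ah := by positivity
    have p3 : (0:ℝ) ≤ Real.sqrt A3 * Real.sqrt B3 := by positivity
    have q1 : (Real.sqrt (δ * aw') + Real.sqrt (δ⁻¹ * aw)) * Real.sqrt B1
        ≤ Real.sqrt M * (Real.sqrt A1 * Real.sqrt B1) := by
      have hB1n : 0 ≤ Real.sqrt B1 := Real.sqrt_nonneg _
      calc (Real.sqrt (δ * aw') + Real.sqrt (δ⁻¹ * aw)) * Real.sqrt B1
          ≤ (Real.sqrt 2 * Real.sqrt A1) * Real.sqrt B1 := by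
            exact mul_le_mul_of_nonneg_right hadd hB1n
        _ ≤ (Real.sqrt M * Real.sqrt A1) * Real.sqrt B1 := by
            have : Real.sqrt 2 * Real.sqrt A1 ≤ Real.sqrt M * Real.sqrt A1 :=
              mul_le_mul_of_nonneg_right hsq2 (Real.sqrt_nonneg _)
            exact mul_le_mul_of_nonneg_right this hB1n
        _ = Real.sqrt M * (Real.sqrt A1 * Real.sqrt B1) := by ring
    have q2 : (1 + K) * (Real.sqrt ag * Real.sqrt ah)
        ≤ Real.sqrt M * (Real.sqrt ag * Real.sqrt ah) :=
      mul_le_mul_of_nonneg_right hsqK p2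
    have q3 : Real.sqrt A3 * Real.sqrt B3
        ≤ Real.sqrt M * (Real.sqrt A3 * Real.sqrt B3) := le_mul_of_one_le_left p3 hsq1
    calc |I1 + δ * I2 + I3 + δ * I4|
        ≤ Real.sqrt A3 * Real.sqrt B3
          + (Real.sqrt (δ * aw') + Real.sqrt (δ⁻¹ * aw)) * Real.sqrt B1
          + (1 + K) * (Real.sqrt ag * Real.sqrt ah) := step1
      _ ≤ Real.sqrt M * (Real.sqrt A1 * Real.sqrt B1 + Real.sqrt ag * Real.sqrt ah
          + Real.sqrt A3 * Real.sqrt B3) := by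
          have e : Real.sqrt M * (Real.sqrt A1 * Real.sqrt B1 + Real.sqrt ag * Real.sqrt ah
              + Real.sqrt A3 * Real.sqrt B3)
            = Real.sqrt M * (Real.sqrt A1 * Real.sqrt B1)
              + Real.sqrt M * (Real.sqrt ag * Real.sqrt ah)
              + Real.sqrt M * (Real.sqrt A3 * Real.sqrt B3) := by ring
          rw [e]
          linarith
  -- step 3: 3-term Cauchy-Schwarz
  have step3 : Real.sqrt A1 * Real.sqrt B1 + Real.sqrt ag * Real.sqrt ah
      + Real.sqrt A3 * Real.sqrt B3
      ≤ Real.sqrt (A1 + ag + A3) * Real.sqrt (B1 + ah + B3) :=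
    cs3_aux A1 ag A3 B1 ah B3 hA10 hag0 (sq_nonneg _) hB10 hah0 (sq_nonneg _)
  -- step 4: identify the statement's sqrt arguments
  have hXsplit : (∫ t in (0:ℝ)..T, (‖g t‖ ^ 2 + δ * ‖w' t‖ ^ 2 + δ⁻¹ * ‖w t‖ ^ 2))
      = ag + δ * aw' + δ⁻¹ * aw := by
    rw [intervalIntegral.integral_add (iig2.add (iiw'2.const_mul δ)) (iiw2.const_mul δ⁻¹),
      intervalIntegral.integral_add iig2 (iiw'2.const_mul δ),
      intervalIntegral.integral_const_mul, intervalIntegral.integral_const_mul]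
  have hYsplit : (∫ t in (0:ℝ)..T, (‖h t‖ ^ 2 + δ * ‖v' t‖ ^ 2)) = ah + δ * av' := by
    rw [intervalIntegral.integral_add iih2 (iiv'2.const_mul δ),
      intervalIntegral.integral_const_mul]
  have hXle : Real.sqrt (A1 + ag + A3)
      ≤ Real.sqrt ((∫ t in (0:ℝ)..T, (‖g t‖ ^ 2 + δ * ‖w' t‖ ^ 2 + δ⁻¹ * ‖w t‖ ^ 2))
          + ‖w T‖ ^ 2 + δ * ‖g T‖ ^ 2) := by
    apply Real.sqrt_le_sqrt
    rw [hXsplit, hA1, hA3]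
    have : 0 ≤ δ * ‖g T‖ ^ 2 := mul_nonneg hδ.le (sq_nonneg _)
    linarith
  have hYle : Real.sqrt (B1 + ah + B3)
      ≤ Real.sqrt ((∫ t in (0:ℝ)..T, (‖h t‖ ^ 2 + δ * ‖v' t‖ ^ 2))
          + ‖v T‖ ^ 2 + δ * ‖h T‖ ^ 2) := by
    apply Real.sqrt_le_sqrt
    rw [hYsplit, hB1, hB3]
    have : 0 ≤ δ * ‖h T‖ ^ 2 := mul_nonneg hδ.le (sq_nonneg _)
    linarith
  rw [hsplit]
  have hMn : 0 ≤ Real.sqrt M := Real.sqrt_nonneg _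
  calc |I1 + δ * I2 + I3 + δ * I4|
      ≤ Real.sqrt M * (Real.sqrt A1 * Real.sqrt B1 + Real.sqrt ag * Real.sqrt ah
        + Real.sqrt A3 * Real.sqrt B3) := step2
    _ ≤ Real.sqrt M * (Real.sqrt (A1 + ag + A3) * Real.sqrt (B1 + ah + B3)) :=
        mul_le_mul_of_nonneg_left step3 hMn
    _ ≤ Real.sqrt M
        * (Real.sqrt ((∫ t in (0:ℝ)..T, (‖g t‖ ^ 2 + δ * ‖w' t‖ ^ 2 + δ⁻¹ * ‖w t‖ ^ 2))
            + ‖w T‖ ^ 2 + δ * ‖g T‖ ^ 2)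
          * Real.sqrt ((∫ t in (0:ℝ)..T, (‖h t‖ ^ 2 + δ * ‖v' t‖ ^ 2))
            + ‖v T‖ ^ 2 + δ * ‖h T‖ ^ 2)) := by
        apply mul_le_mul_of_nonneg_left _ hMn
        exact mul_le_mul hXle hYle (Real.sqrt_nonneg _) (Real.sqrt_nonneg _)
    _ = Real.sqrt (2 * max 2 (1 + K ^ 2))
        * Real.sqrt ((∫ t in (0:ℝ)..T, (‖g t‖ ^ 2 + δ * ‖w' t‖ ^ 2 + δ⁻¹ * ‖w t‖ ^ 2))
            + ‖w T‖ ^ 2 + δ * ‖g T‖ ^ 2)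
        * Real.sqrt ((∫ t in (0:ℝ)..T, (‖h t‖ ^ 2 + δ * ‖v' t‖ ^ 2))
            + ‖v T‖ ^ 2 + δ * ‖h T‖ ^ 2) := by rw [hM]; ring
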